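/- Let f : ℝ^{d×n} → ℝ^d satisfy f(QX) = Q f(X) for every orthogonal matrix Q ∈ ℝ^{d×d} and every X ∈ ℝ^{d×n}. Then for every X, the vector f(X) lies in the span of the columns of X. -/

import Mathlib

open Matrix

/-- If `f : ℝ^{d×n} → ℝ^d` satisfies `f(QX) = Q f(X)` for every orthogonal `Q`,
then `f(X)` lies in the span of the columns of `X`. -/
theorem orth_equivariant_output_in_column_span (d n : ℕ) (hd : 0 < d) (hn : 0 < n)
    (f : Matrix (Fin d) (Fin n) ℝ → (Fin d → ℝ))
    (hf : ∀ (Q : Matrix (Fin d) (Fin d) ℝ) (X : Matrix (Fin d) (Fin n) ℝ),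
      Qᵀ * Q = 1 → f (Q * X) = Q.mulVec (f X)) :
    ∀ X : Matrix (Fin d) (Fin n) ℝ,
      f X ∈ Submodule.span ℝ (Set.range fun j : Fin n => (fun i : Fin d => X i j)) := by
  intro X
  let V : Submodule ℝ (EuclideanSpace ℝ (Fin d)) :=
    Submodule.span ℝ (Set.range fun j : Fin n => WithLp.toLp 2 (fun i : Fin d => X i j))
  let g : EuclideanSpace ℝ (Fin d) ≃ₗᵢ[ℝ] EuclideanSpace ℝ (Fin d) := V.reflection
  let Q : Matrix (Fin d) (Fin d) ℝ := fun i j => g (EuclideanSpace.single j 1) i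
  have hQmul : ∀ v : Fin d → ℝ, Q.mulVec v = WithLp.ofLp (g (WithLp.toLp 2 v)) := by
    intro v
    have hv : (WithLp.toLp 2 v : EuclideanSpace ℝ (Fin d))
        = ∑ j, v j • (EuclideanSpace.single j 1 : EuclideanSpace ℝ (Fin d)) := by
      ext i
      simp [EuclideanSpace.single_apply, Pi.single_apply]
    funext i
    rw [show g (WithLp.toLp 2 v) = g (∑ j, v j • (EuclideanSpace.single j 1 : EuclideanSpace ℝ (Fin d)))
      from by rw [← hv]]
    rw [map_sum]
    simp only [_root_.map_smul]
    simp [Matrix.mulVec, dotProduct, Q, mul_comm]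
  have hQorth : Qᵀ * Q = 1 := by
    ext i j
    have h1 : (Qᵀ * Q) i j = ∑ k, Q k i * Q k j := by
      simp [Matrix.mul_apply, Matrix.transpose_apply]
    have h2 : ∑ k, Q k i * Q k j
        = (inner ℝ (g (EuclideanSpace.single i 1)) (g (EuclideanSpace.single j 1)) : ℝ) := by
      simp only [PiLp.inner_apply, RCLike.inner_apply, conj_trivial, Q]
      exact Finset.sum_congr rfl fun _ _ => mul_comm _ _
    rw [h1, h2, g.inner_map_map]
    simp [EuclideanSpace.inner_single_left, EuclideanSpace.single_apply, Matrix.one_apply,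
      eq_comm]
  have hQX : Q * X = X := by
    ext i j
    have hmem : (WithLp.toLp 2 (fun i : Fin d => X i j) : EuclideanSpace ℝ (Fin d)) ∈ V :=
      Submodule.subset_span ⟨j, rfl⟩
    have h1 : (Q * X) i j = Q.mulVec (fun k => X k j) i := by
      simp [Matrix.mul_apply, Matrix.mulVec, dotProduct]
    rw [h1, hQmul]
    have hfix := Submodule.reflection_mem_subspace_eq_self hmem
    calc (g (WithLp.toLp 2 (fun k => X k j))).ofLp i
        = (WithLp.toLp 2 (fun i : Fin d => X i j) : EuclideanSpace ℝ (Fin d)) i := by rw [hfix]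
      _ = X i j := rfl
  have key := hf Q X hQorth
  rw [hQX, hQmul] at key
  have hmemV := (Submodule.reflection_eq_self_iff (K := V) (WithLp.toLp 2 (f X))).mp
    (by have h := congrArg (WithLp.toLp 2) key; exact h.symm)
  have hmap := Submodule.mem_map_of_mem (f := (WithLp.linearEquiv 2 ℝ (Fin d → ℝ)).toLinearMap) hmemV
  rw [Submodule.map_span, ← Set.range_comp] at hmap
  exact hmap
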